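/- Let Γ be a finite connected simple graph on a nonempty finite vertex set V admitting a free involution, i.e., a graph automorphism σ with σ(σ(v)) = v for all v, σ(v) ≠ v for all vertices v, and such that no vertex v is adjacent to σ(v) (so σ maps no edge to itself). Then the number of edges of Γ is at least the number of vertices; equivalently, the Euler characteristic χ(Γ) = |V| − |E| satisfies χ(Γ) ≤ 0. -/
import Mathlib

/-- A finset preserved by a fixed-point-free involution has even cardinality. -/
lemma even_card_of_fpf_involution {α : Type*} [DecidableEq α] (f : α → α) :
    ∀ (s : Finset α), (∀ x ∈ s, f x ∈ s) → (∀ x ∈ s, f (f x) = x) →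
      (∀ x ∈ s, f x ≠ x) → Even s.card := by
  intro s
  induction s using Finset.strongInduction with
  | _ s ih =>
    intro hmem hinv hne
    rcases s.eq_empty_or_nonempty with rfl | ⟨x, hx⟩
    · simp
    · have hfx : f x ∈ s := hmem x hx
      have hxne : f x ≠ x := hne x hx
      set t := (s.erase x).erase (f x) with ht
      have htsub : t ⊂ s := by
        refine Finset.ssubset_of_subset_of_ssubset ?_ (Finset.erase_ssubset hx)
        exact Finset.erase_subset _ _
      have htmem : ∀ y ∈ t, y ∈ s := fun y hy => htsub.1 hy
      have hcard : t.card = s.card - 2 := by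
        have hmem2 : f x ∈ s.erase x := Finset.mem_erase.2 ⟨hxne, hfx⟩
        rw [ht, Finset.card_erase_of_mem hmem2, Finset.card_erase_of_mem hx]
        omega
      have hEven : Even t.card := by
        refine ih t htsub (fun y hy => ?_) (fun y hy => hinv y (htmem y hy))
          (fun y hy => hne y (htmem y hy))
        have hys := htmem y hy
        rcases Finset.mem_erase.1 hy with ⟨hy1, hy2⟩
        rcases Finset.mem_erase.1 hy2 with ⟨hy3, _⟩
        refine Finset.mem_erase.2 ⟨?_, Finset.mem_erase.2 ⟨?_, hmem y hys⟩⟩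
        · intro h
          apply hy3
          calc y = f (f y) := (hinv y hys).symm
            _ = f (f x) := by rw [h]
            _ = x := hinv x hx
        · intro h
          apply hy1
          rw [← h]
          exact (hinv y hys).symm
      have h2 : 2 ≤ s.card := by
        have : ({x, f x} : Finset α) ⊆ s := by
          intro z hz
          rcases Finset.mem_insert.1 hz with rfl | hz
          · exact hx
          · rw [Finset.mem_singleton.1 hz]; exact hfx
        calc 2 = ({x, f x} : Finset α).card := by
                  rw [Finset.card_insert_of_notMem (by simpa using hxne.symm),
                    Finset.card_singleton]
             _ ≤ s.card := Finset.card_le_card this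
      obtain ⟨k, hk⟩ := hEven
      exact ⟨k + 1, by omega⟩

/-- A connected graph on `n` vertices has at least `n - 1` edges. -/
lemma card_le_card_edgeFinset_add_one {V : Type*} [Fintype V] [Nonempty V]
    (Γ : SimpleGraph V) [Fintype Γ.edgeSet] (hconn : Γ.Connected) :
    Fintype.card V ≤ Γ.edgeFinset.card + 1 := by
  classical
  obtain ⟨v0⟩ := ‹Nonempty V›
  have key : ∀ w : V, w ≠ v0 → ∃ u, Γ.Adj w u ∧ Γ.dist u v0 < Γ.dist w v0 := by
    intro w hw
    obtain ⟨p, hp⟩ := hconn.exists_walk_length_eq_dist w v0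
    cases p with
    | nil => exact absurd rfl hw
    | cons h q =>
      refine ⟨_, h, ?_⟩
      have h1 : Γ.dist _ v0 ≤ q.length := SimpleGraph.dist_le q
      simp only [SimpleGraph.Walk.length_cons] at hp
      omega
  have key' : ∀ w : V, ∃ u, w ≠ v0 → Γ.Adj w u ∧ Γ.dist u v0 < Γ.dist w v0 := by
    intro w
    by_cases h : w = v0
    · exact ⟨w, fun h' => absurd h h'⟩
    · obtain ⟨u, h1, h2⟩ := key w h
      exact ⟨u, fun _ => ⟨h1, h2⟩⟩
  choose u hu using key'
  have hinj : Set.InjOn (fun w => s(w, u w)) ↑(({v0} : Finset V)ᶜ) := by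
    intro a ha b hb hab
    simp only [Finset.coe_compl, Finset.coe_singleton, Set.mem_compl_iff,
      Set.mem_singleton_iff] at ha hb
    simp only [Sym2.eq, Sym2.rel_iff', Prod.mk.injEq, Prod.swap_prod_mk] at hab
    rcases hab with ⟨h1, _⟩ | ⟨h1, h2⟩
    · exact h1
    · have da := (hu a ha).2
      have db := (hu b hb).2
      rw [h2] at da
      rw [← h1] at db
      omega
  have hmaps : ∀ w ∈ (({v0} : Finset V)ᶜ : Finset V), s(w, u w) ∈ Γ.edgeFinset := by
    intro w hw
    simp only [Finset.mem_compl, Finset.mem_singleton] at hw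
    rw [SimpleGraph.mem_edgeFinset, SimpleGraph.mem_edgeSet]
    exact (hu w hw).1
  have := Finset.card_le_card_of_injOn (fun w => s(w, u w)) hmaps hinj
  have hc : (({v0} : Finset V)ᶜ : Finset V).card = Fintype.card V - 1 := by
    rw [Finset.card_compl, Finset.card_singleton]
  have hpos : 1 ≤ Fintype.card V := Fintype.card_pos
  omega

/-- **Nonpositive Euler characteristic of a connected graph with a free involution.**
If a finite connected simple graph `Γ` on a nonempty vertex set admits a free
involution — an automorphism `σ` with `σ (σ v) = v`, `σ v ≠ v` for all `v`, and no
vertex adjacent to its image — then the number of edges is at least the number of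
vertices; equivalently the Euler characteristic `|V| - |E|` is `≤ 0`. -/
theorem euler_char_nonpos_of_connected_free_involution {V : Type*} [Fintype V] [Nonempty V]
    (Γ : SimpleGraph V) [Fintype Γ.edgeSet]
    (hconn : Γ.Connected)
    (σ : Γ ≃g Γ)
    (hinv : ∀ v, σ (σ v) = v)
    (hfree : ∀ v, σ v ≠ v)
    (hnoedge : ∀ v, ¬ Γ.Adj v (σ v)) :
    Fintype.card V ≤ Γ.edgeFinset.card ∧
      (Fintype.card V : ℤ) - Γ.edgeFinset.card ≤ 0 := by
  classical
  -- |V| is even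
  have hVeven : Even (Fintype.card V) := by
    rw [← Finset.card_univ]
    refine even_card_of_fpf_involution (fun v => σ v) Finset.univ
      (fun x _ => Finset.mem_univ _) (fun x _ => hinv x) (fun x _ => hfree x)
  -- |E| is even
  have hEeven : Even Γ.edgeFinset.card := by
    refine even_card_of_fpf_involution (Sym2.map σ) Γ.edgeFinset ?_ ?_ ?_
    · intro e he
      rw [SimpleGraph.mem_edgeFinset] at he ⊢
      induction e with
      | _ a b =>
        rw [SimpleGraph.mem_edgeSet] at he
        simp only [Sym2.map_pair_eq, SimpleGraph.mem_edgeSet]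
        exact σ.map_adj_iff.2 he
    · intro e _
      induction e with
      | _ a b => simp [hinv]
    · intro e he
      rw [SimpleGraph.mem_edgeFinset] at he
      induction e with
      | _ a b =>
        rw [SimpleGraph.mem_edgeSet] at he
        intro h
        simp only [Sym2.map_pair_eq, Sym2.eq, Sym2.rel_iff', Prod.mk.injEq,
          Prod.swap_prod_mk] at h
        rcases h with ⟨h1, _⟩ | ⟨h1, h2⟩
        · exact hfree a h1
        · exact hnoedge b (h2 ▸ he.symm)
  have hle := card_le_card_edgeFinset_add_one Γ hconn
  obtain ⟨k, hk⟩ := hVeven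
  obtain ⟨m, hm⟩ := hEeven
  constructor
  · omega
  · have : Fintype.card V ≤ Γ.edgeFinset.card := by omega
    omega
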